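/- Let m : (ℝ \ {0}) × ℝ → ℂ be continuous, not identically zero, satisfy m(x,u) = m(−x,u) = m(x,−u) = m(−x,−u), and satisfy m(xy, xv+u) + m(xy, xv−u) = 2m(x,u)m(y,v) for all nonzero reals x, y and reals u, v. Then there exists λ ∈ ℂ such that m(x,u) = |x|^λ for all x ≠ 0 and all u ∈ ℝ. -/

import Mathlib

open intervalIntegral Complex

/-- A continuous function `h : ℝ → ℂ` with `h 0 = 1` satisfying the Cauchy exponential
equation is an exponential. -/
lemma cauchy_exp_of_continuous (h : ℝ → ℂ) (hc : Continuous h) (h0 : h 0 = 1)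
    (hmul : ∀ s t : ℝ, h (s + t) = h s * h t) :
    ∃ L : ℂ, ∀ t : ℝ, h t = Complex.exp (L * t) := by
  set H : ℝ → ℂ := fun t => ∫ s in (0:ℝ)..t, h s with hH
  have hHderiv : ∀ t : ℝ, HasDerivAt H (h t) t := fun t =>
    (hc.integral_hasStrictDerivAt 0 t).hasDerivAt
  -- the key shift identity
  have hshift : ∀ a t : ℝ, H (t + a) - H t = h t * H a := by
    intro a t
    have h1 : (∫ s in (0:ℝ)..t, h s) + (∫ s in t..(t + a), h s) = ∫ s in (0:ℝ)..(t + a), h s :=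
      integral_add_adjacent_intervals (hc.intervalIntegrable _ _) (hc.intervalIntegrable _ _)
    have h2 : (∫ s in (0:ℝ)..a, h (t + s)) = ∫ s in (t + 0)..(t + a), h s :=
      integral_comp_add_left h t
    have h3 : (∫ s in (0:ℝ)..a, h (t + s)) = h t * H a := by
      have : (∫ s in (0:ℝ)..a, h (t + s)) = ∫ s in (0:ℝ)..a, h t * h s := by
        apply intervalIntegral.integral_congr
        intro s _
        exact hmul t s
      rw [this, intervalIntegral.integral_const_mul]
    rw [add_zero] at h2
    have : H (t + a) = H t + h t * H a := by
      rw [hH]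
      simp only
      rw [← h1, ← h2, h3]
    rw [this]; ring
  -- choose a with H a ≠ 0
  have hexa : ∃ a : ℝ, H a ≠ 0 := by
    by_contra hcon
    push_neg at hcon
    have hz : H = fun _ => (0 : ℂ) := funext hcon
    have : HasDerivAt H 0 0 := by rw [hz]; exact hasDerivAt_const 0 0
    have := (hHderiv 0).unique this
    rw [h0] at this
    exact one_ne_zero this
  obtain ⟨a, ha⟩ := hexa
  set L : ℂ := (h a - 1) * (H a)⁻¹ with hL
  -- h is differentiable with h' = L * h
  have hrep : h = fun t => (H (t + a) - H t) * (H a)⁻¹ := by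
    funext t
    rw [hshift a t, mul_assoc, mul_inv_cancel₀ ha, mul_one]
  have hderiv : ∀ t : ℝ, HasDerivAt h (L * h t) t := by
    intro t
    have d0 : HasDerivAt (fun x : ℝ => x + a) 1 t := by
      simpa using (hasDerivAt_id t).add_const a
    have d1 : HasDerivAt (fun t : ℝ => H (t + a)) (h (t + a)) t := by
      have := (hHderiv (t + a)).scomp t d0
      rw [one_smul] at this
      exact this
    have d2 : HasDerivAt (fun t : ℝ => (H (t + a) - H t) * (H a)⁻¹)
        ((h (t + a) - h t) * (H a)⁻¹) t := (d1.sub (hHderiv t)).mul_const _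
    have heq2 : (h (t + a) - h t) * (H a)⁻¹ = L * h t := by
      rw [hmul t a, hL]; ring
    rw [heq2] at d2
    exact d2.congr_of_eventuallyEq (Filter.Eventually.of_forall (fun s => by rw [hrep]))
  -- solve the ODE
  refine ⟨L, fun t => ?_⟩
  set φ : ℝ → ℂ := fun t => Complex.exp (-L * t) * h t with hφ
  have hφderiv : ∀ t : ℝ, HasDerivAt φ 0 t := by
    intro t
    have e1 : HasDerivAt (fun z : ℂ => Complex.exp (-L * z)) (Complex.exp (-L * t) * (-L)) t := by
      simpa using ((hasDerivAt_id (t : ℂ)).const_mul (-L)).cexp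
    have e2 : HasDerivAt (fun s : ℝ => Complex.exp (-L * s)) (Complex.exp (-L * t) * (-L)) t :=
      e1.comp_ofReal
    have e3 := e2.mul (hderiv t)
    have : Complex.exp (-L * t) * (-L) * h t + Complex.exp (-L * t) * (L * h t) = 0 := by ring
    rw [this] at e3
    exact e3
  have hconst : φ t = φ 0 :=
    is_const_of_deriv_eq_zero (fun x => (hφderiv x).differentiableAt)
      (fun x => (hφderiv x).deriv) t 0
  have hφ0 : φ 0 = 1 := by simp [hφ, h0]
  have h1 : Complex.exp (-L * t) * h t = 1 := by rw [← hφ0]; exact hconst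
  rw [neg_mul, Complex.exp_neg, inv_mul_eq_one₀ (Complex.exp_ne_zero _)] at h1
  exact h1.symm

theorem exponential_on_double_coset_hypergroup (m : ℝ → ℝ → ℂ)
    (hcont : ContinuousOn (fun p : ℝ × ℝ => m p.1 p.2) {p : ℝ × ℝ | p.1 ≠ 0})
    (hne : ∃ x u, x ≠ 0 ∧ m x u ≠ 0)
    (hcompat : ∀ x : ℝ, x ≠ 0 → ∀ u : ℝ,
      m x u = m (-x) u ∧ m x u = m x (-u) ∧ m x u = m (-x) (-u))
    (heq : ∀ x y : ℝ, x ≠ 0 → y ≠ 0 → ∀ u v : ℝ,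
      m (x * y) (x * v + u) + m (x * y) (x * v - u) = 2 * m x u * m y v) :
    ∃ l : ℂ, ∀ x : ℝ, x ≠ 0 → ∀ u : ℝ, m x u = Complex.exp (l * Real.log |x|) := by
  have hopen : IsOpen {p : ℝ × ℝ | p.1 ≠ 0} := isOpen_ne_fun continuous_fst continuous_const
  -- evenness in second variable
  have hevenu : ∀ x : ℝ, x ≠ 0 → ∀ u : ℝ, m x (-u) = m x u :=
    fun x hx u => ((hcompat x hx u).2.1).symm
  -- factorization: m y u = m 1 u * m y 0
  have hA : ∀ y : ℝ, y ≠ 0 → ∀ u : ℝ, m y u = m 1 u * m y 0 := by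
    intro y hy u
    have h := heq 1 y one_ne_zero hy u 0
    rw [one_mul, mul_zero, zero_add, zero_sub, hevenu y hy u] at h
    linear_combination h / 2
  obtain ⟨x₀, u₀, hx₀, hm₀⟩ := hne
  have hfac := hA x₀ hx₀ u₀
  have h1u₀ : m 1 u₀ ≠ 0 := fun hz => hm₀ (by rw [hfac, hz, zero_mul])
  -- m 1 0 = 1
  have h10 : m 1 0 = 1 := by
    have h := hA 1 one_ne_zero u₀
    have : m 1 u₀ * 1 = m 1 u₀ * m 1 0 := by rw [mul_one, ← h]
    exact (mul_left_cancel₀ h1u₀ this).symm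
  -- g multiplicative
  have hgmul : ∀ x y : ℝ, x ≠ 0 → y ≠ 0 → m (x * y) 0 = m x 0 * m y 0 := by
    intro x y hx hy
    have h := heq x y hx hy 0 0
    rw [mul_zero, zero_add, zero_sub, neg_zero] at h
    linear_combination h / 2
  have hgne : ∀ x : ℝ, x ≠ 0 → m x 0 ≠ 0 := by
    intro x hx hz
    have h := hgmul x x⁻¹ hx (inv_ne_zero hx)
    rw [mul_inv_cancel₀ hx, h10, hz, zero_mul] at h
    exact one_ne_zero h
  -- d'Alembert for c := m 1 ·
  have hdal : ∀ x u v : ℝ, x ≠ 0 → m 1 (x * v + u) + m 1 (x * v - u) = 2 * m 1 u * m 1 v := by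
    intro x u v hx
    have h := heq x x⁻¹ hx (inv_ne_zero hx) u v
    rw [mul_inv_cancel₀ hx] at h
    rw [hA x hx u, hA x⁻¹ (inv_ne_zero hx) v] at h
    have hx1 : m x 0 * m x⁻¹ 0 = 1 := by
      rw [← hgmul x x⁻¹ hx (inv_ne_zero hx), mul_inv_cancel₀ hx, h10]
    linear_combination h + (2 * m 1 u * m 1 v) * hx1
  -- c is constant on nonzero reals
  have hcconst : ∀ x : ℝ, x ≠ 0 → m 1 x = m 1 1 := by
    intro x hx
    have h := hdal x 0 1 hx
    rw [mul_one, add_zero, sub_zero, h10] at h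
    linear_combination h / 2
  -- c 1 = 1 by continuity at (1, 0)
  have hc1 : m 1 1 = 1 := by
    have hca : ContinuousAt (fun p : ℝ × ℝ => m p.1 p.2) (1, 0) :=
      hcont.continuousAt (hopen.mem_nhds (by norm_num))
    have hcomp : ContinuousAt (fun t : ℝ => m 1 t) 0 := by
      have h2 : ContinuousAt (fun t : ℝ => (((1:ℝ), t) : ℝ × ℝ)) 0 :=
        (continuous_const.prodMk continuous_id).continuousAt
      exact ContinuousAt.comp (f := fun t : ℝ => (((1:ℝ), t) : ℝ × ℝ)) hca h2
    have htend : Filter.Tendsto (fun n : ℕ => m 1 (1 / (n + 1 : ℝ))) Filter.atTop (nhds (m 1 0)) := by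
      apply hcomp.tendsto.comp
      exact tendsto_one_div_add_atTop_nhds_zero_nat
    have hconstseq : ∀ n : ℕ, m 1 (1 / (n + 1 : ℝ)) = m 1 1 := by
      intro n
      apply hcconst
      positivity
    rw [funext hconstseq] at htend
    have := tendsto_nhds_unique htend tendsto_const_nhds
    rw [← this, h10]
  have hcall : ∀ u : ℝ, m 1 u = 1 := by
    intro u
    rcases eq_or_ne u 0 with rfl | hu
    · exact h10
    · rw [hcconst u hu, hc1]
  -- so m x u = m x 0 for all u
  have hmg : ∀ x : ℝ, x ≠ 0 → ∀ u : ℝ, m x u = m x 0 := by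
    intro x hx u
    rw [hA x hx u, hcall u, one_mul]
  -- define h on ℝ via exp
  set h : ℝ → ℂ := fun t => m (Real.exp t) 0 with hhdef
  have hhcont : Continuous h := by
    rw [continuous_iff_continuousAt]
    intro t
    have hca : ContinuousAt (fun p : ℝ × ℝ => m p.1 p.2) (Real.exp t, 0) :=
      hcont.continuousAt (hopen.mem_nhds (by simp [Real.exp_ne_zero]))
    exact ContinuousAt.comp (f := fun t : ℝ => ((Real.exp t, (0:ℝ)) : ℝ × ℝ)) hca
      ((Real.continuous_exp.prodMk continuous_const).continuousAt)
  have hh0 : h 0 = 1 := by simp only [hhdef, Real.exp_zero]; exact h10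
  have hhmul : ∀ s t : ℝ, h (s + t) = h s * h t := by
    intro s t
    simp only [hhdef, Real.exp_add]
    exact hgmul _ _ (Real.exp_ne_zero s) (Real.exp_ne_zero t)
  obtain ⟨L, hLrep⟩ := cauchy_exp_of_continuous h hhcont hh0 hhmul
  refine ⟨L, fun x hx u => ?_⟩
  have habs : m x 0 = m |x| 0 := by
    rcases lt_or_gt_of_ne hx with hneg | hpos
    · rw [abs_of_neg hneg]
      exact (hcompat x hx 0).1
    · rw [abs_of_pos hpos]
  have hxabs : |x| = Real.exp (Real.log |x|) := (Real.exp_log (abs_pos.mpr hx)).symm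
  have hfin : m |x| 0 = h (Real.log |x|) := by
    simp only [hhdef]; rw [← hxabs]
  rw [hmg x hx u, habs, hfin]
  exact hLrep (Real.log |x|)
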